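/- For nonnegative λ_1, ..., λ_n and μ > 0 with ∏_{i=1}^n λ_i = μⁿ, and any ε > 0 with ελ_i ≤ 1/2 for all i, one has (1 + εμ)/ (∏_{i=1}^n (1 + ελ_i))^{1/n} ≤ 1 − (1/n) ∑_{i=1}^n ( √(ελ_i/(1+ελ_i)) − √(εμ/(1+εμ)) )². -/

import Mathlib

open Real Finset

noncomputable def gg (v : ℝ) : ℝ := 1 / Real.sqrt (1 + Real.exp (-v))
noncomputable def gg' (v : ℝ) : ℝ :=
  Real.exp (-v) / (2 * (1 + Real.exp (-v)) * Real.sqrt (1 + Real.exp (-v)))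

lemma hasDerivAt_gg (x : ℝ) : HasDerivAt gg (gg' x) x := by
  have hA : 0 < 1 + Real.exp (-x) := by positivity
  have hE : HasDerivAt (fun v : ℝ => 1 + Real.exp (-v)) (-Real.exp (-x)) x := by
    simpa using ((hasDerivAt_neg x).exp.const_add 1)
  have hs : HasDerivAt (fun v : ℝ => Real.sqrt (1 + Real.exp (-v)))
      (-Real.exp (-x) / (2 * Real.sqrt (1 + Real.exp (-x)))) x := hE.sqrt (ne_of_gt hA)
  have h := hs.inv (by positivity)
  have hsq : Real.sqrt (1 + Real.exp (-x)) ^ 2 = 1 + Real.exp (-x) := Real.sq_sqrt hA.le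
  have hspos : 0 < Real.sqrt (1 + Real.exp (-x)) := Real.sqrt_pos.2 hA
  convert h using 1
  · rfl
  · rfl
  · funext v; simp [gg, one_div]
  · rw [gg']
    field_simp
    nlinarith [hsq, hspos]

noncomputable def gg'' (v : ℝ) : ℝ :=
  Real.exp (-v) * (Real.exp (-v) - 2) /
    (4 * (1 + Real.exp (-v)) ^ 2 * Real.sqrt (1 + Real.exp (-v)))

lemma hasDerivAt_gg' (x : ℝ) : HasDerivAt gg' (gg'' x) x := by
  have hA : 0 < 1 + Real.exp (-x) := by positivity
  have hE : HasDerivAt (fun v : ℝ => Real.exp (-v)) (-Real.exp (-x)) x := by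
    simpa using (hasDerivAt_neg x).exp
  have hA' : HasDerivAt (fun v : ℝ => 1 + Real.exp (-v)) (-Real.exp (-x)) x := hE.const_add 1
  have hs : HasDerivAt (fun v : ℝ => Real.sqrt (1 + Real.exp (-v)))
      (-Real.exp (-x) / (2 * Real.sqrt (1 + Real.exp (-x)))) x := hA'.sqrt (ne_of_gt hA)
  have hD : HasDerivAt (fun v : ℝ => 2 * (1 + Real.exp (-v)) * Real.sqrt (1 + Real.exp (-v)))
      ((2 * -Real.exp (-x)) * Real.sqrt (1 + Real.exp (-x)) +
        (2 * (1 + Real.exp (-x))) * (-Real.exp (-x) / (2 * Real.sqrt (1 + Real.exp (-x))))) x :=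
    (hA'.const_mul 2).mul hs
  have hspos : 0 < Real.sqrt (1 + Real.exp (-x)) := Real.sqrt_pos.2 hA
  have hDne : 2 * (1 + Real.exp (-x)) * Real.sqrt (1 + Real.exp (-x)) ≠ 0 := by positivity
  have h := hE.div hD hDne
  have hsq : Real.sqrt (1 + Real.exp (-x)) ^ 2 = 1 + Real.exp (-x) := Real.sq_sqrt hA.le
  convert h using 1
  · rfl
  · rfl
  · rfl
  rw [gg'']
  field_simp
  linear_combination (4*Real.exp (-x)) * hsq

lemma gg_convex : ConvexOn ℝ (Set.Iic (Real.log (1/2))) gg := by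
  have hdiff : Differentiable ℝ gg := fun x => (hasDerivAt_gg x).differentiableAt
  have hderiv : deriv gg = gg' := funext fun x => (hasDerivAt_gg x).deriv
  apply convexOn_of_deriv2_nonneg (convex_Iic _) hdiff.continuous.continuousOn
    hdiff.differentiableOn
  · rw [hderiv]
    exact fun x _ => (hasDerivAt_gg' x).differentiableAt.differentiableWithinAt
  · intro x hx
    rw [interior_Iic] at hx
    have h2 : (2:ℝ) ≤ Real.exp (-x) := by
      have hlog : Real.log 2 ≤ -x := by
        have hle : x ≤ Real.log (1/2) := le_of_lt hx
        rw [show (1:ℝ)/2 = 2⁻¹ by norm_num, Real.log_inv] at hle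
        linarith
      calc (2:ℝ) = Real.exp (Real.log 2) := (Real.exp_log (by norm_num : (0:ℝ) < 2)).symm
        _ ≤ Real.exp (-x) := Real.exp_le_exp.mpr hlog
    have : deriv^[2] gg x = gg'' x := by
      rw [Function.iterate_succ, Function.iterate_one, Function.comp_apply, hderiv,
        (hasDerivAt_gg' x).deriv]
    rw [this, gg'']
    have hA : (0:ℝ) < 1 + Real.exp (-x) := by positivity
    have hnum : 0 ≤ Real.exp (-x) * (Real.exp (-x) - 2) := by nlinarith [Real.exp_pos (-x)]
    positivity

lemma gg_log (u : ℝ) (hu : 0 < u) : gg (Real.log u) = Real.sqrt (u / (1 + u)) := by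
  have h1u : (0:ℝ) < 1 + u := by linarith
  rw [gg, Real.exp_neg, Real.exp_log hu]
  rw [show u / (1+u) = (1 + u⁻¹)⁻¹ by field_simp; ring]
  rw [Real.sqrt_inv, one_div]

lemma sum_sqrt_ge (n : ℕ) (hn : 1 ≤ n) (T : Fin n → ℝ) (t : ℝ)
    (hT : ∀ i, 0 < T i) (ht : 0 < t) (hTh : ∀ i, T i ≤ 1/2)
    (hprod : ∏ i, T i = t ^ n) :
    Real.sqrt (t / (1 + t)) ≤ (1/n) * ∑ i, Real.sqrt (T i / (1 + T i)) := by
  have hn0 : (n:ℝ) ≠ 0 := Nat.cast_ne_zero.2 (by omega)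
  have hw : ∑ _i : Fin n, (1/n : ℝ) = 1 := by
    simp [Finset.sum_const, Finset.card_univ]
    field_simp
  have hmem : ∀ i : Fin n, i ∈ Finset.univ → Real.log (T i) ∈ Set.Iic (Real.log (1/2)) :=
    fun i _ => Real.log_le_log (hT i) (hTh i)
  have hj := gg_convex.map_sum_le (t := Finset.univ) (w := fun _ => (1/n:ℝ))
    (p := fun i => Real.log (T i)) (fun i _ => by positivity) hw hmem
  simp only [smul_eq_mul] at hj
  have hcenter : ∑ i : Fin n, (1/n : ℝ) * Real.log (T i) = Real.log t := by
    rw [← Finset.mul_sum, ← Real.log_prod (fun i _ => (hT i).ne'), hprod,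
      Real.log_pow]
    field_simp
  rw [hcenter, gg_log t ht] at hj
  calc Real.sqrt (t/(1+t)) ≤ ∑ i : Fin n, (1/n:ℝ) * gg (Real.log (T i)) := hj
    _ = (1/n) * ∑ i, Real.sqrt (T i / (1 + T i)) := by
        rw [Finset.mul_sum]
        exact Finset.sum_congr rfl fun i _ => by rw [gg_log _ (hT i)]

theorem eigenvalue_product_estimate (n : ℕ) (hn : 1 ≤ n) (lam : Fin n → ℝ) (μ ε : ℝ)
    (hlam : ∀ i, 0 ≤ lam i) (hμ : 0 < μ) (hprod : ∏ i, lam i = μ ^ n)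
    (hε : 0 < ε) (hsmall : ∀ i, ε * lam i ≤ 1 / 2) :
    (1 + ε * μ) / (∏ i, (1 + ε * lam i)) ^ ((1 : ℝ) / n) ≤
      1 - (1 / n) * ∑ i,
        (Real.sqrt (ε * lam i / (1 + ε * lam i)) - Real.sqrt (ε * μ / (1 + ε * μ))) ^ 2 := by
  have hn0 : (n:ℝ) ≠ 0 := Nat.cast_ne_zero.2 (by omega)
  have hlam' : ∀ i, 0 < lam i := by
    intro i
    rcases (hlam i).lt_or_eq with h | h
    · exact h
    · exfalso
      have h0 : ∏ j, lam j = 0 := Finset.prod_eq_zero (Finset.mem_univ i) h.symm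
      rw [hprod] at h0
      exact (pow_pos hμ n).ne' h0
  have hT : ∀ i, 0 < ε * lam i := fun i => mul_pos hε (hlam' i)
  have hA : ∀ i, 0 < 1 + ε * lam i := fun i => by linarith [hT i]
  have ht : 0 < ε * μ := mul_pos hε hμ
  have h1t : 0 < 1 + ε * μ := by linarith
  have hTprod : ∏ i, (ε * lam i) = (ε * μ) ^ n := by
    rw [Finset.prod_mul_distrib, Finset.prod_const, Finset.card_univ, Fintype.card_fin,
      hprod, mul_pow]
  have hthalf : ε * μ ≤ 1/2 := by
    by_contra hc
    push_neg at hc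
    have hlt : (1/2:ℝ)^n < (ε*μ)^n := pow_lt_pow_left₀ hc (by norm_num) (by omega)
    have hle : ∏ i, (ε * lam i) ≤ (1/2:ℝ)^n := by
      calc ∏ i, (ε*lam i) ≤ ∏ _i : Fin n, (1/2:ℝ) :=
            Finset.prod_le_prod (fun i _ => (hT i).le) (fun i _ => hsmall i)
        _ = (1/2)^n := by rw [Finset.prod_const, Finset.card_univ, Fintype.card_fin]
    rw [hTprod] at hle; linarith
  set P := ∏ i, (1 + ε * lam i) with hPdef
  have hPpos : 0 < P := Finset.prod_pos (fun i _ => hA i)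
  set Q := P ^ ((1:ℝ)/n) with hQdef
  have hQpos : 0 < Q := Real.rpow_pos_of_pos hPpos _
  have hwpos : ∀ i ∈ (univ : Finset (Fin n)), (0:ℝ) ≤ 1/n := fun i _ => by positivity
  have hw1 : ∑ _i : Fin n, (1/n : ℝ) = 1 := by
    rw [Finset.sum_const, Finset.card_univ, Fintype.card_fin, nsmul_eq_mul]
    field_simp
  -- AM-GM 1
  have amgm1 : Q⁻¹ ≤ (1/n) * ∑ i, 1/(1 + ε * lam i) := by
    have h := Real.geom_mean_le_arith_mean_weighted univ (fun _ => 1/n)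
      (fun i => 1/(1 + ε * lam i)) hwpos hw1 (fun i _ => by have := hA i; positivity)
    have hL : ∏ i, (1/(1 + ε * lam i)) ^ ((1:ℝ)/n) = Q⁻¹ := by
      rw [Real.finset_prod_rpow _ _ (fun i _ => by have := hA i; positivity)]
      rw [show ∏ i, (1/(1 + ε * lam i)) = P⁻¹ by
        rw [hPdef, ← Finset.prod_inv_distrib]; simp [one_div]]
      rw [Real.inv_rpow hPpos.le]
    rw [hL] at h
    calc Q⁻¹ ≤ ∑ i, (1/n) * (1/(1 + ε * lam i)) := h
      _ = (1/n) * ∑ i, 1/(1 + ε * lam i) := by rw [Finset.mul_sum]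
  -- AM-GM 2
  have amgm2 : (ε*μ) * Q⁻¹ ≤ (1/n) * ∑ i, (ε * lam i)/(1 + ε * lam i) := by
    have h := Real.geom_mean_le_arith_mean_weighted univ (fun _ => 1/n)
      (fun i => (ε * lam i)/(1 + ε * lam i)) hwpos hw1
      (fun i _ => by have := hA i; have := hT i; positivity)
    have hL : ∏ i, ((ε * lam i)/(1 + ε * lam i)) ^ ((1:ℝ)/n) = (ε*μ) * Q⁻¹ := by
      rw [Real.finset_prod_rpow _ _ (fun i _ => by have := hA i; have := hT i; positivity)]
      rw [Finset.prod_div_distrib, hTprod]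
      rw [Real.div_rpow (by positivity) hPpos.le]
      rw [← Real.rpow_natCast (ε*μ) n, ← Real.rpow_mul ht.le]
      rw [mul_one_div_cancel hn0, Real.rpow_one, div_eq_mul_inv]
    rw [hL] at h
    calc (ε*μ) * Q⁻¹ ≤ ∑ i, (1/n) * ((ε * lam i)/(1 + ε * lam i)) := h
      _ = (1/n) * ∑ i, (ε * lam i)/(1 + ε * lam i) := by rw [Finset.mul_sum]
  -- replacement lemma
  have h3 : Real.sqrt ((ε*μ) / (1 + ε*μ)) ≤
      (1/n) * ∑ i, Real.sqrt ((ε * lam i) / (1 + ε * lam i)) :=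
    sum_sqrt_ge n hn (fun i => ε * lam i) (ε*μ) hT ht hsmall hTprod
  -- sum identity
  have hsum1 : ∑ i, 1/(1 + ε * lam i) + ∑ i, (ε * lam i)/(1 + ε * lam i) = (n:ℝ) := by
    rw [← Finset.sum_add_distrib]
    have : ∀ i : Fin n, 1/(1 + ε * lam i) + (ε * lam i)/(1 + ε * lam i) = 1 := fun i => by
      rw [← add_div, div_self (hA i).ne']
    rw [Finset.sum_congr rfl (fun i _ => this i), Finset.sum_const, Finset.card_univ,
      Fintype.card_fin, nsmul_eq_mul, mul_one]
  -- expansion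
  set s : ℝ := (ε*μ) / (1 + ε*μ) with hsdef
  have hs0 : 0 ≤ s := by positivity
  have hexp : ∑ i, (Real.sqrt (ε * lam i / (1 + ε * lam i)) - Real.sqrt s) ^ 2
      = ∑ i, (ε * lam i)/(1 + ε * lam i) + (n:ℝ) * s
        - 2 * Real.sqrt s * ∑ i, Real.sqrt ((ε * lam i) / (1 + ε * lam i)) := by
    have hterm : ∀ i : Fin n, (Real.sqrt (ε * lam i / (1 + ε * lam i)) - Real.sqrt s) ^ 2
        = (ε * lam i)/(1 + ε * lam i) + s
          - 2 * Real.sqrt s * Real.sqrt ((ε * lam i) / (1 + ε * lam i)) := by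
      intro i
      have e1 : Real.sqrt (ε * lam i / (1 + ε * lam i)) ^ 2 = (ε * lam i)/(1 + ε * lam i) :=
        Real.sq_sqrt (by have := hA i; have := hT i; positivity)
      have e2 : Real.sqrt s ^ 2 = s := Real.sq_sqrt hs0
      rw [sub_sq, e1, e2]; ring
    rw [Finset.sum_congr rfl (fun i _ => hterm i)]
    rw [Finset.sum_sub_distrib, Finset.sum_add_distrib, Finset.sum_const, Finset.card_univ,
      Fintype.card_fin, nsmul_eq_mul, Finset.mul_sum, ← Finset.mul_sum]
  -- Mahler
  have hw : (1/(n:ℝ)) * (n:ℝ) = 1 := by field_simp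
  have hmahler : Q⁻¹ + (ε*μ) * Q⁻¹ ≤ 1 := by
    have h4 : (1/(n:ℝ)) * (∑ i, 1/(1 + ε * lam i) + ∑ i, (ε * lam i)/(1 + ε * lam i)) = 1 := by
      rw [hsum1, hw]
    rw [mul_add] at h4
    linarith [amgm1, amgm2]
  have htq : (ε*μ) * Q⁻¹ ≤ s := by
    have hq : Q⁻¹ ≤ 1/(1 + ε*μ) := by
      rw [le_div_iff₀ h1t]; nlinarith [hmahler, hQpos]
    calc (ε*μ) * Q⁻¹ ≤ (ε*μ) * (1/(1 + ε*μ)) :=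
          mul_le_mul_of_nonneg_left hq ht.le
      _ = s := by rw [hsdef]; ring
  -- final assembly
  have h2r : 2 * Real.sqrt s * Real.sqrt s
      ≤ 2 * Real.sqrt s * ((1/n) * ∑ i, Real.sqrt ((ε * lam i) / (1 + ε * lam i))) :=
    mul_le_mul_of_nonneg_left h3 (by positivity)
  have hr2 : Real.sqrt s * Real.sqrt s = s := Real.mul_self_sqrt hs0
  have hgoal : (1 + ε * μ) / Q = Q⁻¹ + (ε*μ) * Q⁻¹ := by
    rw [div_eq_mul_inv]; ring
  rw [hgoal]
  have hsum1' : (1/(n:ℝ)) * ∑ i, 1/(1 + ε * lam i)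
      = 1 - (1/(n:ℝ)) * ∑ i, (ε * lam i)/(1 + ε * lam i) := by
    have := congrArg (fun x => (1/(n:ℝ)) * x) hsum1
    simp only [mul_add] at this
    rw [hw] at this
    linarith [this]
  rw [hexp]
  rw [mul_sub, mul_add]
  rw [show (1/(n:ℝ)) * ((n:ℝ) * s) = s by rw [← mul_assoc, hw, one_mul]]
  rw [show (1/(n:ℝ)) * (2 * Real.sqrt s * ∑ i, Real.sqrt ((ε * lam i) / (1 + ε * lam i)))
    = 2 * Real.sqrt s * ((1/n) * ∑ i, Real.sqrt ((ε * lam i) / (1 + ε * lam i))) by ring]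
  linarith [amgm1, htq, h2r, hr2, hsum1']
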